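/- Define f(A) = (1−λ)x(v) + λ·M(A) − p|A| for A ⊆ E, where M(A) is the uniform average over all |A|-element subsets R of N of (1/k)Σ_{w∈(N\R)∪A} x(w). Then for every A ⊆ E with |A| ≤ k, f(A) = f(∅) + (λ/k)(Σ_{w∈A} x(w) − (|A|/k)σ) − p|A|; in particular, f is a modular set function of A. (This is equation (9) of the paper, derived from equation (8).) -/

import Mathlib

open Finset

lemma count_aux {α : Type*} [DecidableEq α] (s : Finset α) (m : ℕ) (w : α) (hw : w ∈ s)
    (hm : 1 ≤ m) :
    ((s.powersetCard m).filter (fun R => w ∈ R)).card = (s.card - 1).choose (m - 1) := by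
  rw [← Finset.card_erase_of_mem hw, ← Finset.card_powersetCard]
  apply Finset.card_bij (fun R _ => R.erase w)
  · intro R hR
    simp only [mem_filter, mem_powersetCard] at hR
    refine mem_powersetCard.2 ⟨Finset.erase_subset_erase _ hR.1.1, ?_⟩
    rw [Finset.card_erase_of_mem hR.2, hR.1.2]
  · intro R₁ h₁ R₂ h₂ h
    simp only [mem_filter] at h₁ h₂
    rw [← Finset.insert_erase h₁.2, ← Finset.insert_erase h₂.2, h]
  · intro T hT
    simp only [mem_powersetCard] at hT
    have hwT : w ∉ T := fun h => (Finset.mem_erase.1 (hT.1 h)).1 rfl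
    refine ⟨insert w T, ?_, ?_⟩
    · simp only [mem_filter, mem_powersetCard, Finset.mem_insert_self, and_true]
      constructor
      · exact Finset.insert_subset hw (hT.1.trans (Finset.erase_subset _ _))
      · rw [Finset.card_insert_of_notMem hwT, hT.2, Nat.sub_add_cancel hm]
    · rw [Finset.erase_insert hwT]

lemma sum_aux {α : Type*} [DecidableEq α] (s : Finset α) (m : ℕ) (hm : 1 ≤ m) (x : α → ℝ) :
    ∑ R ∈ s.powersetCard m, ∑ w ∈ R, x w
      = ((s.card - 1).choose (m - 1) : ℝ) * ∑ w ∈ s, x w := by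
  have h1 : ∀ R ∈ s.powersetCard m, ∑ w ∈ R, x w = ∑ w ∈ s, if w ∈ R then x w else 0 := by
    intro R hR
    rw [Finset.sum_ite_mem, Finset.inter_eq_right.2 (mem_powersetCard.1 hR).1]
  rw [Finset.sum_congr rfl h1, Finset.sum_comm, Finset.mul_sum]
  refine Finset.sum_congr rfl fun w hw => ?_
  rw [← Finset.sum_filter, Finset.sum_const, count_aux s m w hw hm]
  simp [mul_comm]

/-- Fix a node `v` with in-neighborhood `N` of size `k ≥ 1`, a
finite set `E` of candidate new in-neighbors disjoint from `N`, health values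
`x`, parameter `lam` and penalty `p`, and write `σ = ∑ u ∈ N, x u`.  Define
`M A` as the uniform average over all `|A|`-element subsets `R` of `N` of
`(1/k) ∑_{w ∈ (N \ R) ∪ A} x w`, and
`f A = (1-lam) * x v + lam * M A - p * |A|`.
Then for every `A ⊆ E` with `|A| ≤ k`,
`f A = f ∅ + (lam/k) * (∑_{w ∈ A} x w - (|A|/k) σ) - p * |A|`;
in particular `f` is a modular set function of `A`. -/
theorem stmt_8 {α : Type*} [DecidableEq α] (v : α) (N E : Finset α) (k : ℕ)
    (hk : 1 ≤ k) (hN : N.card = k) (hdisj : Disjoint N E)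
    (x : α → ℝ) (lam p : ℝ) (σ : ℝ) (hσ : σ = ∑ u ∈ N, x u)
    (M : Finset α → ℝ)
    (hM : ∀ A : Finset α, M A =
      (1 / (k.choose A.card : ℝ)) *
        ∑ R ∈ N.powersetCard A.card, (1 / (k : ℝ)) * ∑ w ∈ (N \ R) ∪ A, x w)
    (f : Finset α → ℝ)
    (hf : ∀ A : Finset α, f A = (1 - lam) * x v + lam * M A - p * A.card) :
    ∀ A ⊆ E, A.card ≤ k →
      f A = f ∅ + (lam / k) * (∑ w ∈ A, x w - ((A.card : ℝ) / k) * σ)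
              - p * A.card := by
  intro A hA hAk
  have hk0 : (k : ℝ) ≠ 0 := Nat.cast_ne_zero.2 (by omega)
  have hM0 : M ∅ = (1 / k) * σ := by rw [hM]; simp [hσ]
  rcases Nat.eq_zero_or_pos A.card with hm0 | hm1
  · have : A = ∅ := Finset.card_eq_zero.1 hm0
    subst this
    simp [hm0]
  set m := A.card with hm
  have hdisjA : Disjoint N A := hdisj.mono_right hA
  have hsum : ∀ R ∈ N.powersetCard m, (1/(k:ℝ)) * ∑ w ∈ (N \ R) ∪ A, x w
      = (1/(k:ℝ)) * ((σ + ∑ w ∈ A, x w) - ∑ w ∈ R, x w) := by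
    intro R hR
    have hRN : R ⊆ N := (mem_powersetCard.1 hR).1
    rw [Finset.sum_union (hdisjA.mono_left (Finset.sdiff_subset)),
      Finset.sum_sdiff_eq_sub hRN, hσ]
    ring_nf
  have hC : (k.choose m : ℝ) ≠ 0 := Nat.cast_ne_zero.2 (Nat.choose_pos hAk).ne'
  have hcard : (N.powersetCard m).card = k.choose m := by
    rw [Finset.card_powersetCard, hN]
  have hS : ∑ R ∈ N.powersetCard m, ∑ w ∈ R, x w = ((k-1).choose (m-1) : ℝ) * σ := by
    rw [sum_aux N m hm1 x, hN, hσ]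
  have hcm : ((k-1).choose (m-1) : ℝ) * k = (m : ℝ) * (k.choose m) := by
    have h := Nat.add_one_mul_choose_eq (k-1) (m-1)
    rw [Nat.sub_add_cancel hk, Nat.sub_add_cancel hm1] at h
    have h2 := congrArg (Nat.cast : ℕ → ℝ) h
    push_cast at h2
    linarith
  have hMA : M A = (1/k) * σ + (1/k) * ∑ w ∈ A, x w - ((m : ℝ)/k) * ((1/k) * σ) := by
    rw [hM, Finset.sum_congr rfl hsum, ← Finset.mul_sum, Finset.sum_sub_distrib,
      Finset.sum_const, hcard, hS, nsmul_eq_mul]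
    rw [← hm]
    field_simp
    ring_nf
    linear_combination (-σ) * hcm
  rw [hf, hf, hM0, hMA]
  simp only [Finset.card_empty, Nat.cast_zero]
  ring
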